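/- arXiv:math/0411483 — 2 statements merged into one kernel-verified Lean document; each statement's English description precedes it below -/
import Mathlib

section
/- Let m > 0 and n ≥ 1. Let f : (ℝ^n ∖ {0}) × (-∞,0] → ℂ be continuous and quasi-homogeneous in the sense that f(sξ, s^m t) = s^{-m-n} f(ξ, t) for all s > 0, ξ ≠ 0, t ≤ 0, and assume f(·, t) is integrable near ξ = 0 for each t ≠ 0. Then ∫_{ℝ^n} f(ξ, -1) dξ = (1/m) ∫_{|ξ|=1} ∫_{-∞}^0 f(ξ, t) dt dS(ξ), both sides being absolutely convergent. -/
open MeasureTheory Set Metric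

section Aux

private lemma qh_deriv {m : ℝ} : ∀ r ∈ Ioi (0:ℝ),
    HasDerivWithinAt (fun r : ℝ => -(r ^ (-m))) (m * r ^ (-m - 1)) (Ioi 0) r := by
  intro r hr
  have h := (Real.hasDerivAt_rpow_const (x := r) (p := -m) (Or.inl (ne_of_gt hr))).neg
  have h2 := h.hasDerivWithinAt (s := Ioi 0)
  rw [show -(-m * r ^ (-m - 1)) = m * r ^ (-m - 1) by ring] at h2
  exact h2

private lemma qh_inj {m : ℝ} (hm : 0 < m) : InjOn (fun r : ℝ => -(r ^ (-m))) (Ioi 0) := by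
  intro a ha b hb hab
  simp only [neg_inj] at hab
  exact Real.rpow_left_injOn (neg_ne_zero.2 hm.ne') (show (0:ℝ) ≤ a from le_of_lt ha) (show (0:ℝ) ≤ b from le_of_lt hb) hab

private lemma qh_image {m : ℝ} (hm : 0 < m) : (fun r : ℝ => -(r ^ (-m))) '' (Ioi 0) = Iio 0 := by
  ext t
  simp only [mem_image, mem_Ioi, mem_Iio]
  constructor
  · rintro ⟨r, hr, rfl⟩
    simp [Real.rpow_pos_of_pos hr]
  · intro ht
    have hmt : (0:ℝ) < -t := by linarith
    refine ⟨(-t) ^ (-m⁻¹), Real.rpow_pos_of_pos hmt _, ?_⟩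
    rw [← Real.rpow_mul hmt.le, neg_mul_neg, inv_mul_cancel₀ hm.ne', Real.rpow_one, neg_neg]

private lemma qh_lintegral {m : ℝ} (hm : 0 < m) (g : ℝ → ENNReal) :
    ∫⁻ t in Iic (0:ℝ), g t
      = ∫⁻ r in Ioi (0:ℝ), ENNReal.ofReal (m * r ^ (-m - 1)) * g (-(r ^ (-m))) := by
  rw [← Measure.restrict_congr_set Iio_ae_eq_Iic, ← qh_image hm,
    lintegral_image_eq_lintegral_abs_det_fderiv_mul volume measurableSet_Ioi
      (fun x hx => ((qh_deriv x hx).hasFDerivWithinAt)) (qh_inj hm) g]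
  refine setLIntegral_congr_fun measurableSet_Ioi (fun r hr => ?_)
  congr 2
  rw [ContinuousLinearMap.det_toSpanSingleton]
  exact abs_of_pos (mul_pos hm (Real.rpow_pos_of_pos hr _))

private lemma qh_integral {m : ℝ} (hm : 0 < m) (g : ℝ → ℂ) :
    ∫ t in Iic (0:ℝ), g t
      = ∫ r in Ioi (0:ℝ), (m * r ^ (-m - 1)) • g (-(r ^ (-m))) := by
  rw [← setIntegral_congr_set Iio_ae_eq_Iic, ← qh_image hm,
    integral_image_eq_integral_abs_deriv_smul measurableSet_Ioi qh_deriv (qh_inj hm) g]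
  refine setIntegral_congr_fun measurableSet_Ioi fun r hr => ?_
  congr 1
  exact abs_of_pos (mul_pos hm (Real.rpow_pos_of_pos hr _))

private lemma vip_lintegral (k : ℕ) (W : ℝ → ENNReal) :
    ∫⁻ r : Ioi (0:ℝ), W r.1 ∂(Measure.volumeIoiPow k)
      = ∫⁻ r in Ioi (0:ℝ), ENNReal.ofReal (r ^ k) * W r := by
  rw [Measure.volumeIoiPow, lintegral_withDensity_eq_lintegral_mul_non_measurable]
  · rw [show ((fun r : Ioi (0:ℝ) => ENNReal.ofReal (r.1 ^ k)) * fun r : Ioi (0:ℝ) => W r.1)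
        = fun r : Ioi (0:ℝ) => ENNReal.ofReal (r.1 ^ k) * W r.1 from rfl,
      lintegral_subtype_comap measurableSet_Ioi (fun r : ℝ => ENNReal.ofReal (r ^ k) * W r)]
  · exact (measurable_subtype_coe.pow_const _).ennreal_ofReal
  · exact ae_of_all _ fun x => ENNReal.ofReal_lt_top

private lemma vip_integral (k : ℕ) (W : ℝ → ℂ) :
    ∫ r : Ioi (0:ℝ), W r.1 ∂(Measure.volumeIoiPow k)
      = ∫ r in Ioi (0:ℝ), (r ^ k : ℝ) • W r := by
  simp only [Measure.volumeIoiPow, ENNReal.ofReal]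
  rw [integral_withDensity_eq_integral_smul
      ((measurable_subtype_coe.pow_const _).real_toNNReal),
    integral_subtype_comap measurableSet_Ioi fun a => Real.toNNReal (a ^ k) • W a,
    setIntegral_congr_fun measurableSet_Ioi fun x hx => ?_]
  rw [NNReal.smul_def, Real.coe_toNNReal _ (pow_nonneg (le_of_lt hx) _)]

end Aux

/-- Polar coordinates formula for quasi-homogeneous functions: if
`f(sξ, s^m t) = s^{-m-n} f(ξ, t)` for `s > 0`, `f` is continuous on
`(ℝⁿ∖{0}) × (-∞,0]` and integrable near `ξ = 0` for each `t ≠ 0`, then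
`∫_{ℝⁿ} f(ξ,-1) dξ = (1/m) ∫_{|ξ|=1} ∫_{-∞}^0 f(ξ,t) dt dS(ξ)`,
both sides being absolutely convergent. -/
theorem quasi_homogeneous_polar_integral
    (n : ℕ) (hn : 1 ≤ n) (m : ℝ) (hm : 0 < m)
    (f : EuclideanSpace ℝ (Fin n) → ℝ → ℂ)
    (hcont : ContinuousOn (fun p : EuclideanSpace ℝ (Fin n) × ℝ => f p.1 p.2)
      ({ξ : EuclideanSpace ℝ (Fin n) | ξ ≠ 0} ×ˢ Iic (0:ℝ)))
    (hhom : ∀ s : ℝ, 0 < s → ∀ ξ : EuclideanSpace ℝ (Fin n), ξ ≠ 0 → ∀ t : ℝ, t ≤ 0 →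
      f (s • ξ) (s ^ m * t) = ((s ^ (-m - (n:ℝ)) : ℝ) : ℂ) * f ξ t)
    (hint : ∀ t : ℝ, t < 0 → IntegrableOn (fun ξ => f ξ t) (ball (0 : EuclideanSpace ℝ (Fin n)) 1)) :
    Integrable (fun ξ => f ξ (-1)) ∧
    Integrable (fun p : sphere (0 : EuclideanSpace ℝ (Fin n)) 1 × ℝ => f (p.1 : EuclideanSpace ℝ (Fin n)) p.2)
      (((volume : Measure (EuclideanSpace ℝ (Fin n))).toSphere).prod (volume.restrict (Iic 0))) ∧
    (∫ ξ, f ξ (-1)) = (1 / (m : ℂ)) *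
      ∫ ξ : sphere (0 : EuclideanSpace ℝ (Fin n)) 1,
        (∫ t in Iic (0:ℝ), f (ξ : EuclideanSpace ℝ (Fin n)) t)
        ∂((volume : Measure (EuclideanSpace ℝ (Fin n))).toSphere) := by
  let E := EuclideanSpace ℝ (Fin n)
  haveI : Nonempty (Fin n) := Fin.pos_iff_nonempty.mp hn
  have hdim : Module.finrank ℝ E = n := finrank_euclideanSpace_fin
  haveI : Nontrivial E := Module.nontrivial_of_finrank_pos (R := ℝ) (by rw [hdim]; exact hn)
  set μ : Measure E := volume with hμ
  set κ : Measure (sphere (0:E) 1) := μ.toSphere with hκ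
  set ν₁ : Measure (Ioi (0:ℝ)) := Measure.volumeIoiPow (n - 1) with hν₁
  have mp : MeasurePreserving (homeomorphUnitSphereProd E)
      (μ.comap Subtype.val) (κ.prod ν₁) := by
    have := μ.measurePreserving_homeomorphUnitSphereProd
    rwa [hdim] at this
  -- the sphere is inside the domain
  have hsph : ∀ η : sphere (0:E) 1, (η : E) ≠ 0 := fun η => ne_of_mem_sphere η.2 one_ne_zero
  -- pointwise homogeneity
  have key : ∀ (η : E), η ≠ 0 → ∀ r : ℝ, 0 < r →
      f (r • η) (-1) = ((r ^ (-m - (n:ℝ)) : ℝ) : ℂ) * f η (-(r ^ (-m))) := by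
    intro η hη r hr
    have h1 : -(r ^ (-m)) ≤ 0 := neg_nonpos.2 (Real.rpow_nonneg hr.le _)
    have h2 := hhom r hr η hη _ h1
    rwa [mul_neg, ← Real.rpow_add hr, add_neg_cancel, Real.rpow_zero] at h2
  set F : EuclideanSpace ℝ (Fin n) → ℂ := fun ξ => f ξ (-1) with hFdef
  -- continuity of the polar-coordinates version of `F`
  have hc' : Continuous (fun p : sphere (0:E) 1 × Ioi (0:ℝ) =>
      ((p.2.1 • (p.1:E), (-1:ℝ)) : EuclideanSpace ℝ (Fin n) × ℝ)) :=
    ((continuous_subtype_val.comp continuous_snd).smul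
        (continuous_subtype_val.comp continuous_fst)).prodMk continuous_const
  have hc : Continuous (fun p : sphere (0:E) 1 × Ioi (0:ℝ) => f (p.2.1 • (p.1:E)) (-1)) :=
    hcont.comp_continuous hc' fun p =>
      ⟨smul_ne_zero (ne_of_gt p.2.2) (hsph p.1), by norm_num⟩
  have hFcont : ContinuousOn F {(0:E)}ᶜ := by
    refine hcont.comp ((continuous_id.prodMk continuous_const).continuousOn) ?_
    intro ξ hξ
    exact ⟨hξ, by norm_num⟩
  have hFmeas : AEStronglyMeasurable F μ := by
    have h := hFcont.aestronglyMeasurable (μ := μ) (measurableSet_singleton (0:E)).compl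
    rwa [MeasureTheory.restrict_compl_singleton] at h
  -- uniform bound of `f` on the compact set `sphere ×ˢ [-1,0]`
  obtain ⟨C, hC⟩ : ∃ C, ∀ q ∈ (sphere (0:E) 1 ×ˢ Icc (-1:ℝ) 0), ‖f q.1 q.2‖ ≤ C := by
    refine ((isCompact_sphere (0:E) 1).prod isCompact_Icc).exists_bound_of_continuousOn
      (hcont.mono ?_)
    rintro ⟨ξ, t⟩ ⟨h1, h2⟩
    exact ⟨ne_of_mem_sphere h1 one_ne_zero, h2.2⟩
  set C₀ : ℝ := max C 0 with hC₀
  have hC₀0 : 0 ≤ C₀ := le_max_right _ _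
  -- decay bound outside the unit ball
  have hbound : ∀ ξ : E, 1 ≤ ‖ξ‖ →
      ‖F ξ‖ ≤ (C₀ * 2 ^ (m + n)) * (1 + ‖ξ‖) ^ (-(m + n)) := by
    intro ξ hs1
    set s : ℝ := ‖ξ‖ with hsdef
    have hs0 : (0:ℝ) < s := lt_of_lt_of_le one_pos hs1
    have hξ0 : ξ ≠ 0 := norm_pos_iff.mp (hsdef ▸ hs0)
    have hη : ‖s⁻¹ • ξ‖ = 1 := by
      rw [norm_smul, norm_inv, norm_norm, ← hsdef, inv_mul_cancel₀ hs0.ne']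
    have hη0 : s⁻¹ • ξ ≠ 0 := by
      intro h
      rw [h] at hη
      simp at hη
    have hm1 : -(1:ℝ) ≤ -(s ^ (-m)) :=
      neg_le_neg (Real.rpow_le_one_of_one_le_of_nonpos hs1 (neg_nonpos.2 hm.le))
    have hm0 : -(s ^ (-m)) ≤ 0 := neg_nonpos.2 (Real.rpow_nonneg hs0.le _)
    have hmem : ((s⁻¹ • ξ : E), -(s ^ (-m))) ∈ sphere (0:E) 1 ×ˢ Icc (-1:ℝ) 0 :=
      ⟨mem_sphere_zero_iff_norm.2 hη, ⟨hm1, hm0⟩⟩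
    have heq : F ξ = ((s ^ (-m - (n:ℝ)) : ℝ) : ℂ) * f (s⁻¹ • ξ) (-(s ^ (-m))) := by
      have h := key (s⁻¹ • ξ) hη0 s hs0
      rwa [smul_inv_smul₀ hs0.ne'] at h
    have hnorm : ‖F ξ‖ ≤ s ^ (-m - (n:ℝ)) * C₀ := by
      rw [heq, norm_mul, Complex.norm_real, Real.norm_eq_abs,
        abs_of_nonneg (Real.rpow_nonneg hs0.le _)]
      exact mul_le_mul_of_nonneg_left ((hC _ hmem).trans (le_max_left _ _))
        (Real.rpow_nonneg hs0.le _)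
    have hrw : s ^ (-m - (n:ℝ)) = s ^ (-(m + n)) := by congr 1; ring
    have hcmp : s ^ (-(m + (n:ℝ))) ≤ 2 ^ (m + n) * (1 + s) ^ (-(m + (n:ℝ))) := by
      have h2s : 1 + s ≤ 2 * s := by linarith
      have hmn : (0:ℝ) < m + n := by
        have : (1:ℝ) ≤ n := by exact_mod_cast hn
        linarith
      have hstep : (1 + s) ^ (m + (n:ℝ)) ≤ 2 ^ (m + (n:ℝ)) * s ^ (m + (n:ℝ)) := by
        calc (1 + s) ^ (m + (n:ℝ)) ≤ (2 * s) ^ (m + (n:ℝ)) :=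
              Real.rpow_le_rpow (by linarith) h2s hmn.le
          _ = 2 ^ (m + (n:ℝ)) * s ^ (m + (n:ℝ)) := Real.mul_rpow (by norm_num) hs0.le
      have hsp : (0:ℝ) < s ^ (m + (n:ℝ)) := Real.rpow_pos_of_pos hs0 _
      have h1sp : (0:ℝ) < (1 + s) ^ (m + (n:ℝ)) := Real.rpow_pos_of_pos (by linarith) _
      have h2p : (0:ℝ) < 2 ^ (m + (n:ℝ)) := Real.rpow_pos_of_pos (by norm_num) _
      rw [Real.rpow_neg hs0.le, Real.rpow_neg (by linarith : (0:ℝ) ≤ 1 + s)]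
      have hinv : (2 ^ (m + (n:ℝ)) * s ^ (m + (n:ℝ)))⁻¹ ≤ ((1 + s) ^ (m + (n:ℝ)))⁻¹ :=
        inv_anti₀ h1sp hstep
      calc (s ^ (m + (n:ℝ)))⁻¹
            = 2 ^ (m + (n:ℝ)) * (2 ^ (m + (n:ℝ)) * s ^ (m + (n:ℝ)))⁻¹ := by
              field_simp
        _ ≤ 2 ^ (m + (n:ℝ)) * ((1 + s) ^ (m + (n:ℝ)))⁻¹ :=
              mul_le_mul_of_nonneg_left hinv h2p.le
    calc ‖F ξ‖ ≤ s ^ (-(m + (n:ℝ))) * C₀ := by rw [← hrw]; exact hnorm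
      _ ≤ (2 ^ (m + n) * (1 + s) ^ (-(m + (n:ℝ)))) * C₀ :=
          mul_le_mul_of_nonneg_right hcmp hC₀0
      _ = (C₀ * 2 ^ (m + n)) * (1 + s) ^ (-(m + (n:ℝ))) := by ring
  -- integrability of `F`
  have hF : Integrable F μ := by
    have hc1 : IntegrableOn F (ball (0:E) 1) μ := hint (-1) (by norm_num)
    have hint2 : Integrable (fun ξ : E => (C₀ * 2 ^ (m + n)) * (1 + ‖ξ‖) ^ (-(m + (n:ℝ)))) μ := by
      refine (integrable_one_add_norm ?_).const_mul _
      rw [hdim]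
      have : (0:ℝ) < m := hm
      linarith
    have hc2 : IntegrableOn F (ball (0:E) 1)ᶜ μ := by
      refine Integrable.mono' hint2.integrableOn hFmeas.restrict ?_
      refine (ae_restrict_iff' measurableSet_ball.compl).2 (ae_of_all _ fun ξ hξ => ?_)
      refine hbound ξ ?_
      simpa [mem_compl_iff, mem_ball, dist_zero_right, not_lt] using hξ
    have := hc1.union hc2
    rwa [union_compl_self, integrableOn_univ] at this
  -- transfer to polar coordinates
  have hΦ : ∀ x : ({(0:E)}ᶜ : Set E),
      (fun p : sphere (0:E) 1 × Ioi (0:ℝ) => f (p.2.1 • (p.1:E)) (-1))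
        (homeomorphUnitSphereProd E x) = F x.1 := by
    intro x
    simp only [homeomorphUnitSphereProd_apply_fst_coe, homeomorphUnitSphereProd_apply_snd_coe]
    rw [smul_inv_smul₀ (norm_ne_zero_iff.2 x.2)]
  have hmap : Measure.map (Subtype.val : ({(0:E)}ᶜ : Set E) → E) (μ.comap Subtype.val) = μ := by
    rw [map_comap_subtype_coe (measurableSet_singleton (0:E)).compl,
      MeasureTheory.restrict_compl_singleton]
  have hh : Integrable (fun p : sphere (0:E) 1 × Ioi (0:ℝ) => f (p.2.1 • (p.1:E)) (-1))
      (κ.prod ν₁) := by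
    rw [← mp.integrable_comp_emb (Homeomorph.measurableEmbedding _)]
    have heq : ((fun p : sphere (0:E) 1 × Ioi (0:ℝ) => f (p.2.1 • (p.1:E)) (-1)) ∘
        (homeomorphUnitSphereProd E)) = F ∘ Subtype.val := funext hΦ
    rw [heq]
    rw [← hmap] at hF
    exact ((MeasurableEmbedding.subtype_coe
      (measurableSet_singleton (0:E)).compl).integrable_map_iff).1 hF
  -- per-sphere-point computation
  have e3 : ∀ η : sphere (0:E) 1, (∫ r : Ioi (0:ℝ), f (r.1 • (η:E)) (-1) ∂ν₁)
      = (1/m : ℝ) • ∫ t in Iic (0:ℝ), f (η:E) t := by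
    intro η
    rw [show ν₁ = Measure.volumeIoiPow (n-1) from rfl,
      vip_integral (n-1) (fun r => f (r • (η:E)) (-1)),
      qh_integral hm (fun t => f (η:E) t), ← integral_smul]
    refine setIntegral_congr_fun measurableSet_Ioi fun r hr => ?_
    rw [key (η:E) (hsph η) r hr, ← Complex.real_smul, smul_smul, smul_smul]
    congr 1
    rw [← Real.rpow_natCast r (n-1), ← Real.rpow_add hr, Nat.cast_sub hn, Nat.cast_one]
    have harith : ((n:ℝ) - 1) + (-m - n) = -m - 1 := by ring
    rw [harith]
    field_simp
  -- the main equality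
  have emain : (∫ ξ, f ξ (-1) ∂μ) = (1 / (m : ℂ)) *
      ∫ η : sphere (0:E) 1, (∫ t in Iic (0:ℝ), f (η:E) t) ∂κ := by
    have e0 : (∫ ξ, f ξ (-1) ∂μ) = ∫ x : ({(0:E)}ᶜ : Set E), F x.1 ∂(μ.comap Subtype.val) := by
      rw [integral_subtype_comap (measurableSet_singleton (0:E)).compl fun x => F x,
        MeasureTheory.restrict_compl_singleton]
    have e1 : ∫ x : ({(0:E)}ᶜ : Set E), F x.1 ∂(μ.comap Subtype.val)
        = ∫ p : sphere (0:E) 1 × Ioi (0:ℝ), f (p.2.1 • (p.1:E)) (-1) ∂(κ.prod ν₁) := by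
      rw [← mp.integral_comp (Homeomorph.measurableEmbedding _)
        (fun p : sphere (0:E) 1 × Ioi (0:ℝ) => f (p.2.1 • (p.1:E)) (-1))]
      exact integral_congr_ae (ae_of_all _ fun x => (hΦ x).symm)
    have e2 : ∫ p : sphere (0:E) 1 × Ioi (0:ℝ), f (p.2.1 • (p.1:E)) (-1) ∂(κ.prod ν₁)
        = ∫ η : sphere (0:E) 1, (∫ r : Ioi (0:ℝ), f (r.1 • (η:E)) (-1) ∂ν₁) ∂κ :=
      integral_prod _ hh
    rw [e0, e1, e2, integral_congr_ae (ae_of_all _ fun η => e3 η), integral_smul,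
      Complex.real_smul]
    norm_num
  refine ⟨hF, ?_, emain⟩
  -- integrability on the product `sphere × (-∞,0]`
  have hgc : ContinuousOn (fun p : sphere (0:E) 1 × ℝ => f (p.1:E) p.2)
      ((univ : Set (sphere (0:E) 1)) ×ˢ Iic (0:ℝ)) := by
    refine hcont.comp
      ((continuous_subtype_val.comp continuous_fst).prodMk continuous_snd).continuousOn ?_
    rintro ⟨η, t⟩ ⟨-, ht⟩
    exact ⟨hsph η, ht⟩
  have hgm : AEStronglyMeasurable (fun p : sphere (0:E) 1 × ℝ => f (p.1:E) p.2)
      (κ.prod (volume.restrict (Iic (0:ℝ)))) := by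
    have h := hgc.aestronglyMeasurable (μ := κ.prod volume)
      (MeasurableSet.univ.prod measurableSet_Iic)
    rwa [← Measure.prod_restrict, Measure.restrict_univ] at h
  refine ⟨hgm, ?_⟩
  show (∫⁻ p, ‖f ((p.1 : sphere (0:E) 1) : E) p.2‖₊ ∂(κ.prod (volume.restrict (Iic (0:ℝ))))) < ⊤
  rw [lintegral_prod (fun p : sphere (0:E) 1 × ℝ => (‖f (p.1:E) p.2‖₊ : ENNReal)) hgm.enorm]
  -- compute the inner integral using the substitution and homogeneity
  have inner : ∀ η : sphere (0:E) 1,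
      (∫⁻ t in Iic (0:ℝ), (‖f (η:E) t‖₊ : ENNReal))
        = ENNReal.ofReal m * ∫⁻ r : Ioi (0:ℝ), (‖f (r.1 • (η:E)) (-1)‖₊ : ENNReal) ∂ν₁ := by
    intro η
    rw [qh_lintegral hm (fun t => (‖f (η:E) t‖₊ : ENNReal)),
      show ν₁ = Measure.volumeIoiPow (n-1) from rfl,
      vip_lintegral (n-1) (fun r => (‖f (r • (η:E)) (-1)‖₊ : ENNReal)),
      ← lintegral_const_mul' _ _ ENNReal.ofReal_ne_top]
    refine setLIntegral_congr_fun measurableSet_Ioi (fun r hr => ?_)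
    have hB : f (η:E) (-(r ^ (-m))) = ((r ^ (m + (n:ℝ)) : ℝ) : ℂ) * f (r • (η:E)) (-1) := by
      rw [key (η:E) (hsph η) r hr, ← mul_assoc, ← Complex.ofReal_mul, ← Real.rpow_add hr]
      norm_num
    rw [hB, nnnorm_mul]
    push_cast
    rw [show ((‖((r ^ (m + (n:ℝ)) : ℝ) : ℂ)‖₊ : ENNReal)) = ENNReal.ofReal (r ^ (m + (n:ℝ))) by
      rw [← Real.enorm_eq_ofReal (Real.rpow_nonneg hr.out.le _)]
      simp
      rfl]
    rw [← mul_assoc, ← mul_assoc]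
    congr 1
    rw [← ENNReal.ofReal_mul (mul_pos hm (Real.rpow_pos_of_pos hr _)).le,
      ← ENNReal.ofReal_mul hm.le]
    congr 1
    rw [mul_assoc, ← Real.rpow_add hr, ← Real.rpow_natCast r (n-1),
      Nat.cast_sub hn, Nat.cast_one]
    congr 1
    ring
  calc (∫⁻ η : sphere (0:E) 1, (∫⁻ t in Iic (0:ℝ), (‖f (η:E) t‖₊ : ENNReal)) ∂κ)
      = ∫⁻ η : sphere (0:E) 1,
          (ENNReal.ofReal m * ∫⁻ r : Ioi (0:ℝ), (‖f (r.1 • (η:E)) (-1)‖₊ : ENNReal) ∂ν₁) ∂κ :=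
        lintegral_congr fun η => inner η
    _ = ENNReal.ofReal m * ∫⁻ η : sphere (0:E) 1,
          (∫⁻ r : Ioi (0:ℝ), (‖f (r.1 • (η:E)) (-1)‖₊ : ENNReal) ∂ν₁) ∂κ :=
        lintegral_const_mul' _ _ ENNReal.ofReal_ne_top
    _ = ENNReal.ofReal m * ∫⁻ p : sphere (0:E) 1 × Ioi (0:ℝ),
          (‖f (p.2.1 • (p.1:E)) (-1)‖₊ : ENNReal) ∂(κ.prod ν₁) := by
        rw [lintegral_prod (fun p : sphere (0:E) 1 × Ioi (0:ℝ) => (‖f (p.2.1 • (p.1:E)) (-1)‖₊ : ENNReal)) hc.measurable.enorm.aemeasurable]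
    _ < ⊤ := ENNReal.mul_lt_top ENNReal.ofReal_lt_top hh.2
end

section
/- Let p : ℝ → ℂ be a function with |p(x)| ≤ A(1+|x|)^{m-1} for some A > 0 and integer m ≥ 1, and let q(x) be a polynomial-type positive function with q(x) ≥ c(1+|x|)^m, c > 0. Then for every λ ≤ 0, sup_{x ∈ ℝ} |p(x)| / (q(x) + |λ|) ≤ C (1 + |λ|^{1/m})^{-1} for a constant C depending only on A, c, m. -/
/-- If `|p(x)| ≤ A(1+|x|)^{m-1}` and `q(x) ≥ c(1+|x|)^m`, then for every `λ ≤ 0`,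
`sup_x |p(x)|/(q(x)+|λ|) ≤ C (1+|λ|^{1/m})⁻¹` with `C` depending only on `A`, `c`, `m`. -/
theorem normal_order_resolvent_decay (m : ℕ) (hm : 1 ≤ m) (A c : ℝ)
    (hA : 0 < A) (hc : 0 < c) :
    ∃ C : ℝ, 0 < C ∧ ∀ p : ℝ → ℂ, ∀ q : ℝ → ℝ,
      (∀ x : ℝ, ‖p x‖ ≤ A * (1 + |x|) ^ (m - 1)) →
      (∀ x : ℝ, c * (1 + |x|) ^ m ≤ q x) →
      ∀ l : ℝ, l ≤ 0 → ∀ x : ℝ,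
        ‖p x‖ / (q x + |l|) ≤ C * (1 + |l| ^ ((m : ℝ))⁻¹)⁻¹ := by
  have hminpos : 0 < min c 1 := lt_min hc one_pos
  refine ⟨2 * A / min c 1, by positivity, ?_⟩
  intro p q hp hq l hl x
  set t := 1 + |x| with htdef
  have ht : (1 : ℝ) ≤ t := le_add_of_nonneg_right (abs_nonneg x)
  have ht0 : (0 : ℝ) ≤ t := le_trans zero_le_one ht
  set μ := |l| ^ ((m : ℝ))⁻¹ with hμdef
  have hμ0 : 0 ≤ μ := Real.rpow_nonneg (abs_nonneg l) _
  have hμm : μ ^ m = |l| := by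
    rw [hμdef, ← Real.rpow_natCast (|l| ^ ((m : ℝ))⁻¹) m,
      ← Real.rpow_mul (abs_nonneg l), inv_mul_cancel₀, Real.rpow_one]
    exact_mod_cast Nat.cast_ne_zero.mpr (by omega)
  have htm : 0 < t ^ m := pow_pos (lt_of_lt_of_le one_pos ht) m
  have hD : 0 < q x + |l| := by nlinarith [hq x, abs_nonneg l]
  have h1μ : 0 < 1 + μ := by linarith
  have key : t ^ (m - 1) * (1 + μ) ≤ 2 * (t ^ m + μ ^ m) := by
    have h1 : t ^ (m - 1) ≤ t ^ m := pow_le_pow_right₀ ht (Nat.sub_le m 1)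
    have h2 : t ^ (m - 1) * μ ≤ t ^ m + μ ^ m := by
      rcases le_total μ t with h | h
      · have h3 : t ^ (m - 1) * μ ≤ t ^ (m - 1) * t :=
          mul_le_mul_of_nonneg_left h (pow_nonneg ht0 _)
        have h4 : t ^ (m - 1) * t = t ^ m := by
          rw [← pow_succ]; congr 1; omega
        nlinarith [pow_nonneg hμ0 m]
      · have h3 : t ^ (m - 1) * μ ≤ μ ^ (m - 1) * μ :=
          mul_le_mul_of_nonneg_right (pow_le_pow_left₀ ht0 h _) hμ0
        have h4 : μ ^ (m - 1) * μ = μ ^ m := by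
          rw [← pow_succ]; congr 1; omega
        nlinarith
    nlinarith [pow_nonneg ht0 (m - 1), pow_nonneg hμ0 m]
  have hDen : min c 1 * (t ^ m + μ ^ m) ≤ q x + |l| := by
    have h1 : min c 1 * t ^ m ≤ q x :=
      le_trans (mul_le_mul_of_nonneg_right (min_le_left c 1) (le_of_lt htm)) (hq x)
    have h2 : min c 1 * μ ^ m ≤ |l| := by
      rw [hμm]; nlinarith [abs_nonneg l, min_le_right c 1]
    linarith
  have heq : 2 * A / min c 1 * min c 1 = 2 * A :=
    div_mul_cancel₀ _ (ne_of_gt hminpos)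
  rw [← div_eq_mul_inv, div_le_div_iff₀ hD h1μ]
  have hpx : ‖p x‖ * (1 + μ) ≤ A * (t ^ (m - 1) * (1 + μ)) := by
    have := hp x
    nlinarith [norm_nonneg (p x)]
  have hub : A * (t ^ (m - 1) * (1 + μ)) ≤ 2 * A * (t ^ m + μ ^ m) := by
    nlinarith
  have hlb : 2 * A * (t ^ m + μ ^ m) ≤ 2 * A / min c 1 * (q x + |l|) := by
    have h5 : 2 * A / min c 1 * (min c 1 * (t ^ m + μ ^ m))
        ≤ 2 * A / min c 1 * (q x + |l|) :=
      mul_le_mul_of_nonneg_left hDen (by positivity)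
    calc 2 * A * (t ^ m + μ ^ m)
        = 2 * A / min c 1 * (min c 1 * (t ^ m + μ ^ m)) := by
          rw [← mul_assoc, heq]
      _ ≤ _ := h5
  linarith
end
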